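/- Let x, y be vertices of the tree T and for a, b ∈ X write c_{ab}(z) = ⟨c_z(x,y)δ_b, δ_a⟩. Then for every b ∈ X and every natural number k, the set of vertices a ∈ X such that c_{ab}(z) = ± z^k w^ℓ for some ℓ and all z ∈ 𝔻 has at most 2 elements; and for every a ∈ X and every natural number k, the set of vertices b ∈ X such that c_{ab}(z) = ± z^k w^ℓ for some ℓ and all z ∈ 𝔻 has at most 2 elements. Equivalently, for each b and each k there are at most 2 vertices a with d(a,b) = k and c_{ab} not identically zero on 𝔻, and symmetrically in a and b. -/

import Mathlib

noncomputable section

open scoped ComplexConjugate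

/-- `ℓ²(X)`: the Hilbert space of square-summable complex functions on `X`. -/
abbrev ell2 (X : Type) : Type := lp (fun _ : X => ℂ) 2

/-- The Dirac function `δ_v` at a vertex `v`. -/
noncomputable def delta {X : Type} [DecidableEq X] (v : X) : ell2 X :=
  lp.single 2 v (1 : ℂ)

/-- `w = √(1 − z²)`, using the principal branch of the square root, which is
holomorphic off the negative real axis and positive on the positive reals. -/
noncomputable def W (z : ℂ) : ℂ := (1 - z ^ 2) ^ ((1 : ℂ) / 2)

/-- The defining property of the edge operator `c_z(x,y)` for adjacent vertices
`x, y`: it sends `δ_x ↦ wδ_x − zδ_y`, `δ_y ↦ wδ_y + zδ_x`, and fixes `δ_v` for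
every other vertex `v`. -/
def IsEdgeOp {X : Type} [DecidableEq X] (z : ℂ) (x y : X)
    (A : ell2 X →L[ℂ] ell2 X) : Prop :=
  A (delta x) = W z • delta x - z • delta y ∧
  A (delta y) = W z • delta y + z • delta x ∧
  ∀ v : X, v ≠ x → v ≠ y → A (delta v) = delta v

/-- The product `f(v₀,v₁) * f(v₁,v₂) * ⋯ * f(v_{n−1},v_n)` along a walk
`v₀, v₁, …, v_n`. -/
def walkProd {X : Type} {T : SimpleGraph X} {E : Type} [Monoid E]
    (f : X → X → E) : {a b : X} → T.Walk a b → E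
  | _, _, SimpleGraph.Walk.nil => 1
  | _, _, SimpleGraph.Walk.cons (u := u) (v := v) _ p => f u v * walkProd f p

lemma inner_delta {X : Type} [DecidableEq X] (a : X) (f : ell2 X) :
    (inner ℂ (delta a) f : ℂ) = f a := by
  simp [delta, lp.inner_single_left]

lemma delta_apply {X : Type} [DecidableEq X] (a v : X) :
    (delta a : ell2 X) v = if v = a then 1 else 0 := by
  simp [delta, lp.single_apply, Pi.single_apply]

lemma inner_delta_delta {X : Type} [DecidableEq X] (a b : X) :
    (inner ℂ (delta a) (delta b) : ℂ) = if a = b then 1 else 0 := by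
  rw [inner_delta, delta_apply]

-- Lemma A
lemma fix_of_coeff_zero {X : Type} [DecidableEq X] (A : ell2 X →L[ℂ] ell2 X)
    (u v : X) (hA : ∀ a : X, a ≠ u → a ≠ v → A (delta a) = delta a)
    (f : ell2 X) (hu : f u = 0) (hv : f v = 0) : A f = f := by
  have hs : HasSum (fun i : X => lp.single 2 i (f i)) f :=
    lp.hasSum_single ENNReal.ofNat_ne_top f
  have hs2 : HasSum (fun i : X => A (lp.single 2 i (f i))) (A f) :=
    A.hasSum hs
  have : ∀ i : X, A (lp.single 2 i (f i)) = lp.single 2 i (f i) := by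
    intro i
    have h1 : lp.single 2 i (f i) = (f i) • delta i := by
      simp [delta, ← lp.single_smul]
    by_cases hiu : i = u
    · subst hiu; rw [h1, hu, zero_smul, map_zero]
    by_cases hiv : i = v
    · subst hiv; rw [h1, hv, zero_smul, map_zero]
    rw [h1, map_smul, hA i hiu hiv]
  rw [funext this] at hs2
  exact hs2.unique hs

lemma edge_coeff {X : Type} [DecidableEq X] {z : ℂ} {u v : X} (huv : u ≠ v)
    {A : ell2 X →L[ℂ] ell2 X} (hA : IsEdgeOp z u v A) (f : ell2 X) :
    (∀ a : X, a ≠ u → a ≠ v → (inner ℂ (delta a) (A f) : ℂ) = inner ℂ (delta a) f)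
    ∧ (inner ℂ (delta u) (A f) : ℂ) = W z * f u + z * f v
    ∧ (inner ℂ (delta v) (A f) : ℂ) = W z * f v - z * f u := by
  obtain ⟨h1, h2, h3⟩ := hA
  set g : ell2 X := f - f u • delta u - f v • delta v with hg
  have hgu : g u = 0 := by
    rw [hg, lp.coeFn_sub, lp.coeFn_sub, Pi.sub_apply, Pi.sub_apply, lp.coeFn_smul, lp.coeFn_smul, Pi.smul_apply, Pi.smul_apply]
    simp [hg, delta_apply, huv.symm, huv]
  have hgv : g v = 0 := by
    rw [hg, lp.coeFn_sub, lp.coeFn_sub, Pi.sub_apply, Pi.sub_apply, lp.coeFn_smul, lp.coeFn_smul, Pi.smul_apply, Pi.smul_apply]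
    simp [hg, delta_apply, huv, huv.symm]
  have hAg : A g = g := fix_of_coeff_zero A u v h3 g hgu hgv
  have hf : f = g + f u • delta u + f v • delta v := by
    simp [hg]; abel
  have hAf : A f = g + (f u) • (W z • delta u - z • delta v)
      + (f v) • (W z • delta v + z • delta u) := by
    conv_lhs => rw [hf]
    rw [map_add, map_add, map_smul, map_smul, hAg, h1, h2]
  have key : ∀ a : X, (inner ℂ (delta a) (A f) : ℂ) =
      (inner ℂ (delta a) g : ℂ) + f u * (W z * (if a = u then 1 else 0) - z * (if a = v then 1 else 0))
      + f v * (W z * (if a = v then 1 else 0) + z * (if a = u then 1 else 0)) := by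
    intro a
    rw [hAf]
    simp only [inner_add_right, inner_smul_right, inner_sub_right, inner_delta_delta]
  have keyg : ∀ a : X, (inner ℂ (delta a) g : ℂ) = g a := fun a => inner_delta a g
  refine ⟨fun a hau hav => ?_, ?_, ?_⟩
  · rw [key a, keyg a]
    simp only [if_neg hau, if_neg hav]
    have : g a = f a := by
      rw [hg, lp.coeFn_sub, lp.coeFn_sub, Pi.sub_apply, Pi.sub_apply, lp.coeFn_smul, lp.coeFn_smul, Pi.smul_apply, Pi.smul_apply]
      simp [hg, delta_apply, hau, hav]
    rw [this, inner_delta]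
    ring
  · rw [key u, keyg u, hgu]
    simp only [if_pos rfl, if_neg huv, if_true]
    ring
  · rw [key v, keyg v, hgv]
    simp only [if_pos rfl, if_neg huv.symm, if_true]
    ring

open SimpleGraph in
lemma tree_path_length {X : Type} {T : SimpleGraph X} (hconn : T.Connected)
    (hacyc : T.IsAcyclic) {a b : X} (p : T.Walk a b) (hp : p.IsPath) :
    p.length = T.dist a b := by
  obtain ⟨q, hq, hql⟩ := hconn.exists_path_of_dist a b
  have : (⟨p, hp⟩ : T.Path a b) = ⟨q, hq⟩ := hacyc.path_unique _ _
  rw [show p = q from congrArg Subtype.val this, hql]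

open SimpleGraph in
lemma mem_support_eq_getVert {X : Type} [DecidableEq X] {T : SimpleGraph X} (hconn : T.Connected)
    (hacyc : T.IsAcyclic) {b y a : X} (q : T.Walk b y) (hq : q.IsPath)
    (ha : a ∈ q.support) : a = q.getVert (T.dist b a) := by
  have h1 : (q.takeUntil a ha).length = T.dist b a :=
    tree_path_length hconn hacyc _ (hq.takeUntil ha)
  have h2 := q.take_spec ha
  have := SimpleGraph.Walk.getVert_append (q.takeUntil a ha) (q.dropUntil a ha)
    (q.takeUntil a ha).length
  rw [h2] at this
  simp only [lt_irrefl, if_false, Nat.sub_self, SimpleGraph.Walk.getVert_zero] at this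
  rw [← h1, this]

lemma W_continuousAt_zero : ContinuousAt (fun t : ℝ => W (t : ℂ)) 0 := by
  have h1 : ContinuousAt (fun t : ℝ => (1 - (t : ℂ) ^ 2)) 0 := by fun_prop
  have h2 : ContinuousAt (fun w : ℂ => w ^ ((1 : ℂ) / 2))
      ((fun t : ℝ => (1 - (t : ℂ) ^ 2)) 0) := by
    have : ((fun t : ℝ => (1 - (t : ℂ) ^ 2)) 0) = 1 := by norm_num
    rw [this]
    exact continuousAt_cpow_const Complex.one_mem_slitPlane
  have h3 := ContinuousAt.comp (g := fun w : ℂ => w ^ ((1 : ℂ) / 2))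
    (f := fun t : ℝ => 1 - (t : ℂ) ^ 2) (x := (0 : ℝ)) h2 h1
  simpa only [W, Function.comp_def] using h3

lemma W_zero : W 0 = 1 := by simp [W]

lemma monomial_exp_lt_false {ε ε' : ℂ} {k k' l l' : ℕ}
    (hε : ε = 1 ∨ ε = -1)
    (h : ∀ z ∈ Metric.ball (0 : ℂ) 1, ε * z ^ k * W z ^ l = ε' * z ^ k' * W z ^ l')
    (hkk : k < k') : False := by
  have heq : ∀ t ∈ Set.Ioo (0 : ℝ) (1/2),
      ε * W (t : ℂ) ^ l = ε' * (t : ℂ) ^ (k' - k) * W (t : ℂ) ^ l' := by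
    intro t ht
    have hmem : (t : ℂ) ∈ Metric.ball (0 : ℂ) 1 := by
      simp only [Metric.mem_ball, dist_zero_right, Complex.norm_real, Real.norm_eq_abs]
      rw [abs_of_pos ht.1]; linarith [ht.2]
    have heq1 := h t hmem
    have ht0 : (t : ℂ) ≠ 0 := by exact_mod_cast ne_of_gt ht.1
    have hpow : (t : ℂ) ^ k' = (t : ℂ) ^ k * (t : ℂ) ^ (k' - k) := by
      rw [← pow_add]; congr 1; omega
    rw [hpow] at heq1
    apply mul_left_cancel₀ (pow_ne_zero k ht0)
    calc (t:ℂ)^k * (ε * W t ^ l) = ε * (t:ℂ)^k * W t ^ l := by ring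
    _ = ε' * ((t:ℂ)^k * (t:ℂ)^(k'-k)) * W t ^ l' := heq1
    _ = (t:ℂ)^k * (ε' * (t:ℂ)^(k'-k) * W t ^ l') := by ring
  have hF1 : Filter.Tendsto (fun t : ℝ => ε * W (t : ℂ) ^ l)
      (nhdsWithin 0 (Set.Ioi 0)) (nhds ε) := by
    have hc : ContinuousAt (fun t : ℝ => ε * W (t : ℂ) ^ l) 0 :=
      continuousAt_const.mul (W_continuousAt_zero.pow l)
    have ht := (hc.continuousWithinAt (s := Set.Ioi 0)).tendsto
    have h0 : ε * W ((0:ℝ) : ℂ) ^ l = ε := by simp [W_zero]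
    rwa [h0] at ht
  have hF2 : Filter.Tendsto (fun t : ℝ => ε' * (t : ℂ) ^ (k' - k) * W (t : ℂ) ^ l')
      (nhdsWithin 0 (Set.Ioi 0)) (nhds 0) := by
    have hc : ContinuousAt (fun t : ℝ => ε' * (t : ℂ) ^ (k' - k) * W (t : ℂ) ^ l') 0 :=
      (continuousAt_const.mul ((Complex.continuous_ofReal.continuousAt).pow _)).mul
        (W_continuousAt_zero.pow l')
    have ht := (hc.continuousWithinAt (s := Set.Ioi 0)).tendsto
    have h0 : ε' * ((0:ℝ) : ℂ) ^ (k' - k) * W ((0:ℝ) : ℂ) ^ l' = 0 := by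
      have hne : k' - k ≠ 0 := by omega
      simp [zero_pow hne]
    rwa [h0] at ht
  have hEv : (fun t : ℝ => ε * W (t : ℂ) ^ l) =ᶠ[nhdsWithin 0 (Set.Ioi 0)]
      (fun t : ℝ => ε' * (t : ℂ) ^ (k' - k) * W (t : ℂ) ^ l') := by
    filter_upwards [Ioo_mem_nhdsGT_of_mem (by norm_num : (0:ℝ) ∈ Set.Ico (0:ℝ) (1/2))]
      with t ht using heq t ht
  have hcontra : ε = 0 := tendsto_nhds_unique (hF1.congr' hEv) hF2
  rcases hε with rfl | rfl <;> simp at hcontra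

lemma monomial_exp_eq {ε ε' : ℂ} {k k' l l' : ℕ}
    (hε : ε = 1 ∨ ε = -1) (hε' : ε' = 1 ∨ ε' = -1)
    (h : ∀ z ∈ Metric.ball (0 : ℂ) 1, ε * z ^ k * W z ^ l = ε' * z ^ k' * W z ^ l') :
    k = k' := by
  by_contra hne
  rcases Nat.lt_or_ge k k' with hlt | hge
  · exact monomial_exp_lt_false hε h hlt
  · exact monomial_exp_lt_false hε' (fun z hz => (h z hz).symm) (by omega)

@[simp] lemma walkProd_nil {X : Type} {T : SimpleGraph X} {E : Type} [Monoid E]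
    (f : X → X → E) {a : X} : walkProd f (SimpleGraph.Walk.nil : T.Walk a a) = 1 := rfl

@[simp] lemma walkProd_cons {X : Type} {T : SimpleGraph X} {E : Type} [Monoid E]
    (f : X → X → E) {u v w : X} (h : T.Adj u v) (p : T.Walk v w) :
    walkProd f (SimpleGraph.Walk.cons h p) = f u v * walkProd f p := rfl

lemma walkProd_structure {X : Type} [DecidableEq X] {T : SimpleGraph X}
    (hconn : T.Connected) (hacyc : T.IsAcyclic)
    (c : ℂ → X → X → (ell2 X →L[ℂ] ell2 X))
    (hedge : ∀ z ∈ Metric.ball (0 : ℂ) 1, ∀ u v : X, T.Adj u v →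
      IsEdgeOp z u v (c z u v))
    {u0 y0 : X} (p : T.Walk u0 y0) : p.IsPath → ∀ b : X,
    (b ∉ p.support → ∀ z ∈ Metric.ball (0 : ℂ) 1,
        walkProd (c z) p (delta b) = delta b)
    ∧ (b ∈ p.support → ∀ a : X,
        (∀ z ∈ Metric.ball (0 : ℂ) 1,
            (inner ℂ (delta a) (walkProd (c z) p (delta b)) : ℂ) = 0)
        ∨ (a ∈ p.support ∧ ∃ ε l : _, (ε = (1:ℂ) ∨ ε = -1) ∧
            ∀ z ∈ Metric.ball (0 : ℂ) 1,
              (inner ℂ (delta a) (walkProd (c z) p (delta b)) : ℂ)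
                = ε * z ^ (T.dist a b) * W z ^ l)) := by
  induction p with
  | nil =>
    intro _ b
    constructor
    · intro _ z _
      simp [ContinuousLinearMap.one_apply]
    · intro hb a
      simp only [SimpleGraph.Walk.support_nil, List.mem_singleton] at hb
      subst hb
      by_cases hab : a = b
      · subst hab
        refine Or.inr ⟨by simp, 1, 0, Or.inl rfl, fun z hz => ?_⟩
        simp [ContinuousLinearMap.one_apply, inner_delta_delta, SimpleGraph.dist_self,
          -inner_self_eq_norm_sq_to_K]
      · refine Or.inl fun z hz => ?_
        simp [ContinuousLinearMap.one_apply, inner_delta_delta, hab]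
  | @cons u v w h q ih =>
    intro hp b
    rw [SimpleGraph.Walk.cons_isPath_iff] at hp
    obtain ⟨hq, hu⟩ := hp
    have huv : u ≠ v := h.ne
    have ihb := ih hq b
    constructor
    · -- b not in support
      intro hb z hz
      rw [SimpleGraph.Walk.support_cons, List.mem_cons] at hb
      push_neg at hb
      obtain ⟨hbu, hbq⟩ := hb
      have hbv : b ≠ v := fun hbv => hbq (hbv ▸ q.start_mem_support)
      rw [walkProd_cons, ContinuousLinearMap.mul_apply, (ihb.1 hbq) z hz,
        (hedge z hz u v h).2.2 b hbu hbv]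
    · -- b in support
      intro hb a
      rw [SimpleGraph.Walk.support_cons, List.mem_cons] at hb
      have hedgez : ∀ z ∈ Metric.ball (0:ℂ) 1, IsEdgeOp z u v (c z u v) :=
        fun z hz => hedge z hz u v h
      rcases hb with hbu | hbq
      · -- b = u
        subst hbu
        have hGz : ∀ z ∈ Metric.ball (0:ℂ) 1,
            walkProd (c z) (SimpleGraph.Walk.cons h q) (delta b)
              = W z • delta b - z • delta v := by
          intro z hz
          rw [walkProd_cons, ContinuousLinearMap.mul_apply, (ihb.1 hu) z hz,
            (hedgez z hz).1]
        by_cases hab : a = b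
        · subst hab
          refine Or.inr ⟨by simp, 1, 1, Or.inl rfl, fun z hz => ?_⟩
          rw [hGz z hz]
          simp [inner_sub_right, inner_smul_right, inner_delta_delta, huv,
            SimpleGraph.dist_self, -inner_self_eq_norm_sq_to_K]
        · by_cases hav : a = v
          · subst hav
            have hd : T.dist a b = 1 := by
              rw [SimpleGraph.dist_eq_one_iff_adj]; exact h.symm
            refine Or.inr ⟨by simp [SimpleGraph.Walk.support_cons,
              q.start_mem_support], -1, 0, Or.inr rfl, fun z hz => ?_⟩
            rw [hGz z hz, hd]
            simp [inner_sub_right, inner_smul_right, inner_delta_delta, huv.symm,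
                -inner_self_eq_norm_sq_to_K]
          · refine Or.inl fun z hz => ?_
            rw [hGz z hz]
            simp [inner_sub_right, inner_smul_right, inner_delta_delta, hab, hav]
      · -- b in q.support
        have hbu : b ≠ u := fun hbu => hu (hbu ▸ hbq)
        have ih2 := ihb.2 hbq
        -- coefficient of u in G z vanishes
        have hGu : ∀ z ∈ Metric.ball (0:ℂ) 1,
            ((walkProd (c z) q (delta b)) : ∀ _ : X, ℂ) u = 0 := by
          intro z hz
          rcases ih2 u with h0 | ⟨hmem, _⟩
          · rw [← inner_delta]; exact h0 z hz
          · exact absurd hmem hu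
        have hcoeff := fun (z : ℂ) (hz : z ∈ Metric.ball (0:ℂ) 1) =>
          edge_coeff huv (hedgez z hz) (walkProd (c z) q (delta b))
        have hprod : ∀ z, walkProd (c z) (SimpleGraph.Walk.cons h q) (delta b)
            = c z u v (walkProd (c z) q (delta b)) := by
          intro z; rw [walkProd_cons, ContinuousLinearMap.mul_apply]
        by_cases hau : a = u
        · subst hau
          rcases ih2 v with hv0 | ⟨hvmem, ε, l, hεpm, hval⟩
          · refine Or.inl fun z hz => ?_
            rw [hprod z, (hcoeff z hz).2.1, hGu z hz]
            have : ((walkProd (c z) q (delta b)) : ∀ _ : X, ℂ) v = 0 := by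
              rw [← inner_delta]; exact hv0 z hz
            rw [this]; ring
          · -- distance computation
            have hdist : T.dist a b = T.dist v b + 1 := by
              have hr : (q.takeUntil b hbq).IsPath := hq.takeUntil hbq
              have hrl : (q.takeUntil b hbq).length = T.dist v b :=
                tree_path_length hconn hacyc _ hr
              have har : a ∉ (q.takeUntil b hbq).support :=
                fun har => hu (q.support_takeUntil_subset hbq har)
              have hr' : (SimpleGraph.Walk.cons h (q.takeUntil b hbq)).IsPath := by
                rw [SimpleGraph.Walk.cons_isPath_iff]; exact ⟨hr, har⟩
              have := tree_path_length hconn hacyc _ hr'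
              rw [SimpleGraph.Walk.length_cons, hrl] at this
              omega
            refine Or.inr ⟨by simp, ε, l, hεpm, fun z hz => ?_⟩
            rw [hprod z, (hcoeff z hz).2.1, hGu z hz]
            have hvc : ((walkProd (c z) q (delta b)) : ∀ _ : X, ℂ) v
                = ε * z ^ (T.dist v b) * W z ^ l := by
              rw [← inner_delta]; exact hval z hz
            rw [hvc, hdist]
            ring
        · by_cases hav : a = v
          · subst hav
            rcases ih2 a with hv0 | ⟨hvmem, ε, l, hεpm, hval⟩
            · refine Or.inl fun z hz => ?_
              rw [hprod z, (hcoeff z hz).2.2, hGu z hz]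
              have : ((walkProd (c z) q (delta b)) : ∀ _ : X, ℂ) a = 0 := by
                rw [← inner_delta]; exact hv0 z hz
              rw [this]; ring
            · refine Or.inr ⟨by simp [SimpleGraph.Walk.support_cons, hvmem],
                ε, l + 1, hεpm, fun z hz => ?_⟩
              rw [hprod z, (hcoeff z hz).2.2, hGu z hz]
              have hvc : ((walkProd (c z) q (delta b)) : ∀ _ : X, ℂ) a
                  = ε * z ^ (T.dist a b) * W z ^ l := by
                rw [← inner_delta]; exact hval z hz
              rw [hvc]
              ring
          · rcases ih2 a with hv0 | ⟨hamem, ε, l, hεpm, hval⟩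
            · refine Or.inl fun z hz => ?_
              rw [hprod z, (hcoeff z hz).1 a hau hav, hv0 z hz]
            · refine Or.inr ⟨by simp [SimpleGraph.Walk.support_cons, hamem],
                ε, l, hεpm, fun z hz => ?_⟩
              rw [hprod z, (hcoeff z hz).1 a hau hav, hval z hz]


/-- Let `x, y` be vertices of the tree `T` and write
`c_{ab}(z) = ⟨c_z(x,y)δ_b, δ_a⟩`.  For every `b ∈ X` and every `k ∈ ℕ`, the set of
vertices `a` with `c_{ab}(z) = ± z^k w^ℓ` for some `ℓ` and all `z ∈ 𝔻` has at most
2 elements, and symmetrically in `a` and `b`.  Equivalently, for each `b` and `k`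
there are at most 2 vertices `a` with `d(a,b) = k` and `c_{ab}` not identically zero
on `𝔻`, and symmetrically. -/
theorem matrix_coefficient_count {X : Type} [DecidableEq X] (T : SimpleGraph X)
    (hconn : T.Connected) (hacyc : T.IsAcyclic)
    (c : ℂ → X → X → (ell2 X →L[ℂ] ell2 X))
    (hedge : ∀ z ∈ Metric.ball (0 : ℂ) 1, ∀ u v : X, T.Adj u v →
      IsEdgeOp z u v (c z u v))
    (hgeo : ∀ z ∈ Metric.ball (0 : ℂ) 1, ∀ u v : X, ∀ p : T.Walk u v,
      p.length = T.dist u v → c z u v = walkProd (c z) p)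
    (x y : X) :
    (∀ (b : X) (k : ℕ), ∃ a₁ a₂ : X, ∀ a : X,
      (∃ (ε : ℂ) (l : ℕ), (ε = 1 ∨ ε = -1) ∧ ∀ z ∈ Metric.ball (0 : ℂ) 1,
        (inner ℂ (delta a) (c z x y (delta b)) : ℂ) = ε * z ^ k * W z ^ l) →
      a = a₁ ∨ a = a₂) ∧
    (∀ (a : X) (k : ℕ), ∃ b₁ b₂ : X, ∀ b : X,
      (∃ (ε : ℂ) (l : ℕ), (ε = 1 ∨ ε = -1) ∧ ∀ z ∈ Metric.ball (0 : ℂ) 1,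
        (inner ℂ (delta a) (c z x y (delta b)) : ℂ) = ε * z ^ k * W z ^ l) →
      b = b₁ ∨ b = b₂) ∧
    (∀ (b : X) (k : ℕ), ∃ a₁ a₂ : X, ∀ a : X, T.dist a b = k →
      (∃ z ∈ Metric.ball (0 : ℂ) 1, (inner ℂ (delta a) (c z x y (delta b)) : ℂ) ≠ 0) →
      a = a₁ ∨ a = a₂) ∧
    (∀ (a : X) (k : ℕ), ∃ b₁ b₂ : X, ∀ b : X, T.dist a b = k →
      (∃ z ∈ Metric.ball (0 : ℂ) 1, (inner ℂ (delta a) (c z x y (delta b)) : ℂ) ≠ 0) →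
      b = b₁ ∨ b = b₂) := by
  classical
  obtain ⟨p, hp, hpl⟩ := hconn.exists_path_of_dist x y
  have hc : ∀ z ∈ Metric.ball (0 : ℂ) 1, c z x y = walkProd (c z) p :=
    fun z hz => hgeo z hz x y p hpl
  have hstruct := walkProd_structure hconn hacyc c hedge p hp
  -- rephrase in terms of c z x y
  have hzero : ∀ b : X, b ∉ p.support → ∀ z ∈ Metric.ball (0 : ℂ) 1,
      c z x y (delta b) = delta b := by
    intro b hb z hz
    rw [hc z hz]; exact (hstruct b).1 hb z hz
  have hdich : ∀ b ∈ p.support, ∀ a : X,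
      (∀ z ∈ Metric.ball (0 : ℂ) 1,
          (inner ℂ (delta a) (c z x y (delta b)) : ℂ) = 0)
      ∨ (a ∈ p.support ∧ ∃ ε l : _, (ε = (1:ℂ) ∨ ε = -1) ∧
          ∀ z ∈ Metric.ball (0 : ℂ) 1,
            (inner ℂ (delta a) (c z x y (delta b)) : ℂ)
              = ε * z ^ (T.dist a b) * W z ^ l) := by
    intro b hb a
    rcases (hstruct b).2 hb a with h0 | ⟨hmem, ε, l, hεpm, hval⟩
    · exact Or.inl fun z hz => by rw [hc z hz]; exact h0 z hz
    · exact Or.inr ⟨hmem, ε, l, hεpm, fun z hz => by rw [hc z hz]; exact hval z hz⟩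
  have hhalf : (1/2 : ℂ) ∈ Metric.ball (0 : ℂ) 1 := by
    simp only [Metric.mem_ball, dist_zero_right]
    norm_num
  have hWhalf : W (1/2 : ℂ) ≠ 0 := by
    rw [W, Ne, Complex.cpow_eq_zero_iff]
    norm_num
  have hloc : ∀ (b : X) (hb : b ∈ p.support) (a : X) (k : ℕ), a ∈ p.support →
      T.dist a b = k →
      a = (p.dropUntil b hb).getVert k ∨ a = (p.takeUntil b hb).reverse.getVert k := by
    intro b hb a k hamem hd
    have hsplit := p.take_spec hb
    rw [← hsplit, SimpleGraph.Walk.mem_support_append_iff] at hamem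
    rcases hamem with h1 | h2
    · right
      have hrev : a ∈ (p.takeUntil b hb).reverse.support := by
        rw [SimpleGraph.Walk.support_reverse, List.mem_reverse]; exact h1
      have hg := mem_support_eq_getVert hconn hacyc _ (hp.takeUntil hb).reverse hrev
      rw [SimpleGraph.dist_comm, hd] at hg
      exact hg
    · left
      have hg := mem_support_eq_getVert hconn hacyc _ (hp.dropUntil hb) h2
      rw [SimpleGraph.dist_comm, hd] at hg
      exact hg
  have claim3 : ∀ (b : X) (k : ℕ), ∃ a₁ a₂ : X, ∀ a : X, T.dist a b = k →
      (∃ z ∈ Metric.ball (0 : ℂ) 1,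
        (inner ℂ (delta a) (c z x y (delta b)) : ℂ) ≠ 0) →
      a = a₁ ∨ a = a₂ := by
    intro b k
    by_cases hb : b ∈ p.support
    · refine ⟨(p.dropUntil b hb).getVert k, (p.takeUntil b hb).reverse.getVert k,
        fun a hd hP => ?_⟩
      obtain ⟨z, hz, hne⟩ := hP
      rcases hdich b hb a with h0 | ⟨hamem, _⟩
      · exact absurd (h0 z hz) hne
      · exact hloc b hb a k hamem hd
    · refine ⟨b, b, fun a hd hP => ?_⟩
      obtain ⟨z, hz, hne⟩ := hP
      rw [hzero b hb z hz, inner_delta_delta] at hne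
      left; by_contra hab; simp [hab] at hne
  have claim4 : ∀ (a : X) (k : ℕ), ∃ b₁ b₂ : X, ∀ b : X, T.dist a b = k →
      (∃ z ∈ Metric.ball (0 : ℂ) 1,
        (inner ℂ (delta a) (c z x y (delta b)) : ℂ) ≠ 0) →
      b = b₁ ∨ b = b₂ := by
    intro a k
    by_cases ha : a ∈ p.support
    · refine ⟨(p.dropUntil a ha).getVert k, (p.takeUntil a ha).reverse.getVert k,
        fun b hd hP => ?_⟩
      obtain ⟨z, hz, hne⟩ := hP
      by_cases hb : b ∈ p.support
      · exact hloc a ha b k hb (by rwa [SimpleGraph.dist_comm])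
      · rw [hzero b hb z hz, inner_delta_delta] at hne
        have hab : a = b := by by_contra hab; simp [hab] at hne
        exact absurd (hab ▸ ha) hb
    · refine ⟨a, a, fun b hd hP => ?_⟩
      obtain ⟨z, hz, hne⟩ := hP
      by_cases hb : b ∈ p.support
      · rcases hdich b hb a with h0 | ⟨hamem, _⟩
        · exact absurd (h0 z hz) hne
        · exact absurd hamem ha
      · rw [hzero b hb z hz, inner_delta_delta] at hne
        left
        by_contra hba
        have hab : a ≠ b := fun hh => hba hh.symm
        simp [hab] at hne
  have hkd : ∀ (a b : X) (k : ℕ),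
      (∃ (ε : ℂ) (l : ℕ), (ε = 1 ∨ ε = -1) ∧ ∀ z ∈ Metric.ball (0 : ℂ) 1,
        (inner ℂ (delta a) (c z x y (delta b)) : ℂ) = ε * z ^ k * W z ^ l) →
      T.dist a b = k ∧ ∃ z ∈ Metric.ball (0 : ℂ) 1,
        (inner ℂ (delta a) (c z x y (delta b)) : ℂ) ≠ 0 := by
    rintro a b k ⟨ε, l, hεpm, hval⟩
    have hεne : ε ≠ 0 := by rcases hεpm with rfl | rfl <;> norm_num
    have hne : (inner ℂ (delta a) (c (1/2) x y (delta b)) : ℂ) ≠ 0 := by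
      rw [hval _ hhalf]
      exact mul_ne_zero (mul_ne_zero hεne (pow_ne_zero _ (by norm_num)))
        (pow_ne_zero _ hWhalf)
    refine ⟨?_, ⟨1/2, hhalf, hne⟩⟩
    by_cases hb : b ∈ p.support
    · rcases hdich b hb a with h0 | ⟨hamem, ε', l', hε'pm, hval'⟩
      · exact absurd (h0 _ hhalf) hne
      · exact monomial_exp_eq hε'pm hεpm
          (fun z hz => (hval' z hz).symm.trans (hval z hz))
    · have hab : a = b := by
        have hz0 := hzero b hb _ hhalf
        rw [hz0, inner_delta_delta] at hne
        by_contra hab; simp [hab] at hne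
      subst hab
      have h1 : ∀ z ∈ Metric.ball (0 : ℂ) 1,
          (1:ℂ) * z ^ 0 * W z ^ 0 = ε * z ^ k * W z ^ l := by
        intro z hz
        have hv := hval z hz
        rw [hzero a hb z hz, inner_delta_delta, if_pos rfl] at hv
        simpa using hv
      have hk0 := monomial_exp_eq (Or.inl rfl) hεpm h1
      rw [SimpleGraph.dist_self]
      omega
  refine ⟨?_, ?_, claim3, claim4⟩
  · intro b k
    obtain ⟨a₁, a₂, hA⟩ := claim3 b k
    exact ⟨a₁, a₂, fun a hyp => hA a (hkd a b k hyp).1 (hkd a b k hyp).2⟩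
  · intro a k
    obtain ⟨b₁, b₂, hB⟩ := claim4 a k
    exact ⟨b₁, b₂, fun b hyp => hB b (hkd a b k hyp).1 (hkd a b k hyp).2⟩
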